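/- Let n ≥ 3 and 1 ≤ k ≤ n−1. Let λ₁ ≥ λ₂ ≥ … ≥ λ_n > 0, set κ_α = 1/λ_α and F^{αα} = σ_{k−1}(κ|α)·κ_α²/σ_k(κ)². Define, for a symmetric n×n real matrix ξ, I₃ = −Σ_{α≠γ} σ_{k−2}(κ|αγ)·κ_α²κ_γ²·ξ_{αγ}² + 2·Σ_{α≠γ} σ_{k−1}(κ|α)·κ_α²·κ_γ·ξ_{αγ}². Then (1/σ_k(κ)²)·I₃ ≥ Σ_{α,γ≥2, α≠γ} F^{αα}·ξ_{αγ}²/λ_γ + Σ_{γ≥2} F^{11}·ξ_{1γ}²/λ_γ + (1 + (n−k)/(n−1))·Σ_{α≥2} F^{αα}·ξ_{α1}²/λ₁. -/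
import Mathlib


open scoped Classical

noncomputable section

/-- The `j`-th elementary symmetric function of the family `κ` restricted to the
finite index set `s`; it is `1` for `j = 0`, and `0` for `j < 0` (or for `j`
larger than the cardinality of `s`). -/
def sigmaE {ι : Type*} (s : Finset ι) (j : ℤ) (κ : ι → ℝ) : ℝ :=
  if 0 ≤ j then ∑ t ∈ s.powersetCard j.toNat, ∏ i ∈ t, κ i else 0

/-- `σ_j(κ)`, the `j`-th elementary symmetric polynomial evaluated at `κ`. -/
def sigmaV {ι : Type*} [Fintype ι] (j : ℤ) (κ : ι → ℝ) : ℝ :=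
  sigmaE Finset.univ j κ

/-- `σ_j(κ|α)`: `σ_j` of `κ` with the `α`-th entry deleted. -/
def sigmaV1 {ι : Type*} [Fintype ι] [DecidableEq ι] (j : ℤ) (κ : ι → ℝ) (α : ι) : ℝ :=
  sigmaE (Finset.univ.erase α) j κ

/-- `σ_j(κ|αβ)`: `σ_j` of `κ` with the `α`-th and `β`-th entries deleted. -/
def sigmaV2 {ι : Type*} [Fintype ι] [DecidableEq ι] (j : ℤ) (κ : ι → ℝ) (α β : ι) : ℝ :=
  sigmaE ((Finset.univ.erase α).erase β) j κ

/-- `σ_j(A)` for a real `n × n` matrix `A`: the `j`-th elementary symmetric function of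
the eigenvalues of `A` when `A` is symmetric (= Hermitian over `ℝ`), junk value `0`
otherwise. -/
def sigmaMat {n : ℕ} (j : ℤ) (A : Matrix (Fin n) (Fin n) ℝ) : ℝ :=
  if h : A.IsHermitian then sigmaV j h.eigenvalues else 0

/-- The Hessian quotient operator `F(A) = σ_n(A)/σ_{n-k}(A)`. -/
def Fquot {n : ℕ} (k : ℕ) (A : Matrix (Fin n) (Fin n) ℝ) : ℝ :=
  sigmaMat (n : ℤ) A / sigmaMat ((n : ℤ) - (k : ℤ)) A

lemma sigmaE_of_neg {ι : Type*} {s : Finset ι} {j : ℤ} (hj : j < 0) (x : ι → ℝ) :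
    sigmaE s j x = 0 := by simp [sigmaE, not_le.2 hj]

lemma sigmaE_zero {ι : Type*} (s : Finset ι) (x : ι → ℝ) : sigmaE s 0 x = 1 := by
  simp [sigmaE]

lemma sigmaE_empty {ι : Type*} {j : ℤ} (hj : j ≠ 0) (x : ι → ℝ) :
    sigmaE (∅ : Finset ι) j x = 0 := by
  rcases lt_or_ge j 0 with h | h
  · exact sigmaE_of_neg h x
  · have h1 : 0 < j := lt_of_le_of_ne h (Ne.symm hj)
    have h2 : (0:ℕ) < j.toNat := by omega
    rw [sigmaE, if_pos h]
    rw [Finset.powersetCard_eq_empty.2 (by simp [h2])]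
    simp

lemma sigmaE_nonneg {ι : Type*} {s : Finset ι} (j : ℤ) {x : ι → ℝ}
    (hx : ∀ i ∈ s, 0 ≤ x i) : 0 ≤ sigmaE s j x := by
  rw [sigmaE]
  split
  · refine Finset.sum_nonneg fun t ht => Finset.prod_nonneg fun i hi => ?_
    exact hx i ((Finset.mem_powersetCard.1 ht).1 hi)
  · exact le_refl 0

lemma sigmaE_insert {ι : Type*} [DecidableEq ι] {s : Finset ι} {a : ι} (ha : a ∉ s)
    (j : ℤ) (x : ι → ℝ) :
    sigmaE (insert a s) j x = sigmaE s j x + x a * sigmaE s (j - 1) x := by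
  rcases lt_trichotomy j 0 with h | h | h
  · rw [sigmaE_of_neg h, sigmaE_of_neg h, sigmaE_of_neg (by omega)]
    ring
  · subst h
    rw [sigmaE_zero, sigmaE_zero, sigmaE_of_neg (by norm_num)]
    ring
  · obtain ⟨m, hm⟩ : ∃ m : ℕ, j.toNat = m + 1 := ⟨j.toNat - 1, by omega⟩
    have hm' : (j - 1).toNat = m := by omega
    rw [sigmaE, sigmaE, sigmaE, if_pos (by omega : (0:ℤ) ≤ j), if_pos (by omega : (0:ℤ) ≤ j),
      if_pos (by omega : (0:ℤ) ≤ j - 1), hm, hm']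
    rw [Finset.powersetCard_succ_insert ha]
    rw [Finset.sum_union]
    · congr 1
      rw [Finset.sum_image]
      · rw [Finset.mul_sum]
        refine Finset.sum_congr rfl fun t ht => ?_
        have hat : a ∉ t := fun h => ha ((Finset.mem_powersetCard.1 ht).1 h)
        rw [Finset.prod_insert hat]
      · intro t ht u hu h
        have hat : a ∉ t := fun h => ha ((Finset.mem_powersetCard.1 ht).1 h)
        have hau : a ∉ u := fun h => ha ((Finset.mem_powersetCard.1 hu).1 h)
        rw [← Finset.erase_insert hat, ← Finset.erase_insert hau, h]
    · rw [Finset.disjoint_left]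
      intro t ht ht'
      have hat : a ∉ t := fun h => ha ((Finset.mem_powersetCard.1 ht).1 h)
      obtain ⟨u, hu, rfl⟩ := Finset.mem_image.1 ht'
      exact hat (Finset.mem_insert_self a u)

lemma sigmaE_erase {ι : Type*} [DecidableEq ι] {s : Finset ι} {a : ι} (ha : a ∈ s)
    (j : ℤ) (x : ι → ℝ) :
    sigmaE s j x = sigmaE (s.erase a) j x + x a * sigmaE (s.erase a) (j - 1) x := by
  conv_lhs => rw [← Finset.insert_erase ha]
  exact sigmaE_insert (Finset.notMem_erase a s) j x

lemma sigmaE_sumA {ι : Type*} [DecidableEq ι] (s : Finset ι) (x : ι → ℝ) (j : ℤ) :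
    ((j : ℝ) + 1) * sigmaE s (j + 1) x = ∑ i ∈ s, x i * sigmaE (s.erase i) j x := by
  induction s using Finset.induction_on generalizing j with
  | empty =>
    simp only [Finset.sum_empty]
    rcases eq_or_ne (j + 1) 0 with h | h
    · have : j = -1 := by omega
      subst this; norm_num
    · rw [sigmaE_empty h x]; ring
  | @insert a s ha ih =>
    rw [Finset.sum_insert ha, Finset.erase_insert ha]
    have hrw : ∀ i ∈ s, x i * sigmaE ((insert a s).erase i) j x
        = x i * sigmaE (s.erase i) j x + x a * (x i * sigmaE (s.erase i) (j - 1) x) := by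
      intro i hi
      have hia : a ≠ i := fun h => ha (h ▸ hi)
      rw [Finset.erase_insert_of_ne hia,
        sigmaE_insert (fun h => ha (Finset.mem_of_mem_erase h)) j x]
      ring
    rw [Finset.sum_congr rfl hrw, Finset.sum_add_distrib, ← Finset.mul_sum, ← ih j,
      ← ih (j - 1), sigmaE_insert ha (j + 1) x]
    have e1 : j + 1 - 1 = j := by ring
    have e2 : j - 1 + 1 = j := by ring
    rw [e1, e2]
    push_cast
    ring

lemma sigmaE_sumB {ι : Type*} [DecidableEq ι] (s : Finset ι) (x : ι → ℝ) (j : ℤ) :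
    ∑ i ∈ s, sigmaE (s.erase i) j x = ((s.card : ℝ) - (j : ℝ)) * sigmaE s j x := by
  induction s using Finset.induction_on generalizing j with
  | empty =>
    simp only [Finset.sum_empty, Finset.card_empty]
    rcases eq_or_ne j 0 with h | h
    · subst h; norm_num
    · rw [sigmaE_empty h x]; ring
  | @insert a s ha ih =>
    rw [Finset.sum_insert ha, Finset.erase_insert ha]
    have hrw : ∀ i ∈ s, sigmaE ((insert a s).erase i) j x
        = sigmaE (s.erase i) j x + x a * sigmaE (s.erase i) (j - 1) x := by
      intro i hi
      have hia : a ≠ i := fun h => ha (h ▸ hi)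
      rw [Finset.erase_insert_of_ne hia,
        sigmaE_insert (fun h => ha (Finset.mem_of_mem_erase h)) j x]
    rw [Finset.sum_congr rfl hrw, Finset.sum_add_distrib, ← Finset.mul_sum, ih j,
      ih (j - 1), sigmaE_insert ha j x, Finset.card_insert_of_notMem ha]
    push_cast
    ring

lemma sigmaE_claim {ι : Type*} [DecidableEq ι] (s : Finset ι) (x : ι → ℝ) {c : ℝ}
    (hc : 0 ≤ c) (hx : ∀ i ∈ s, c ≤ x i) (j : ℤ) :
    c * ((s.card : ℝ) - (j : ℝ)) * sigmaE s j x ≤ ((j : ℝ) + 1) * sigmaE s (j + 1) x := by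
  rw [sigmaE_sumA, mul_assoc, ← sigmaE_sumB s x j, Finset.mul_sum]
  refine Finset.sum_le_sum fun i hi => ?_
  have hnn : 0 ≤ sigmaE (s.erase i) j x :=
    sigmaE_nonneg j fun l hl => le_trans hc (hx l (Finset.mem_of_mem_erase hl))
  exact mul_le_mul_of_nonneg_right (hx i hi) hnn

lemma sigmaE_pos {ι : Type*} {s : Finset ι} {j : ℤ} (hj : 0 ≤ j) (hjs : j.toNat ≤ s.card)
    {x : ι → ℝ} (hx : ∀ i ∈ s, 0 < x i) : 0 < sigmaE s j x := by
  rw [sigmaE, if_pos hj]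
  refine Finset.sum_pos (fun t ht => Finset.prod_pos fun i hi =>
    hx i ((Finset.mem_powersetCard.1 ht).1 hi)) ?_
  exact Finset.powersetCard_nonempty.2 hjs

lemma sum_pairs_split {ι : Type*} [Fintype ι] [DecidableEq ι] (i0 : ι) (f : ι → ι → ℝ) :
    ∑ α, ∑ γ ∈ Finset.univ.erase α, f α γ
      = (∑ α ∈ Finset.univ.erase i0, ∑ γ ∈ (Finset.univ.erase i0).erase α, f α γ)
        + (∑ γ ∈ Finset.univ.erase i0, f i0 γ)
        + ∑ α ∈ Finset.univ.erase i0, f α i0 := by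
  rw [← Finset.add_sum_erase Finset.univ _ (Finset.mem_univ i0)]
  have hin : ∀ α ∈ Finset.univ.erase i0,
      ∑ γ ∈ Finset.univ.erase α, f α γ
        = f α i0 + ∑ γ ∈ (Finset.univ.erase i0).erase α, f α γ := by
    intro α hα
    have hi0 : i0 ∈ Finset.univ.erase α :=
      Finset.mem_erase.2 ⟨Ne.symm (Finset.ne_of_mem_erase hα), Finset.mem_univ i0⟩
    rw [← Finset.add_sum_erase _ _ hi0, Finset.erase_right_comm]
  rw [Finset.sum_congr rfl hin, Finset.sum_add_distrib]
  ring

/-- estimate of the term `I₃`, (2.28)–(2.31): with `λ₁ ≥ ⋯ ≥ λ_n > 0`,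
`κ_α = 1/λ_α`, `F^{αα} = σ_{k-1}(κ|α)κ_α²/σ_k(κ)²`, and
`I₃ = -Σ_{α≠γ} σ_{k-2}(κ|αγ) κ_α²κ_γ² ξ_{αγ}² + 2 Σ_{α≠γ} σ_{k-1}(κ|α) κ_α² κ_γ ξ_{αγ}²`
for a symmetric matrix `ξ`, one has
`(1/σ_k(κ)²) I₃ ≥ Σ_{α,γ≥2, α≠γ} F^{αα} ξ_{αγ}²/λ_γ + Σ_{γ≥2} F^{11} ξ_{1γ}²/λ_γ
  + (1 + (n-k)/(n-1)) Σ_{α≥2} F^{αα} ξ_{α1}²/λ₁`. -/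
theorem stmt_14 (n k : ℕ) (hn : 3 ≤ n) (hk1 : 1 ≤ k) (hk2 : k ≤ n - 1)
    (lam : Fin n → ℝ) (hpos : ∀ α, 0 < lam α) (hord : ∀ α β : Fin n, α ≤ β → lam β ≤ lam α)
    (ξ : Matrix (Fin n) (Fin n) ℝ) (hξ : ξ.IsSymm) :
    let i0 : Fin n := ⟨0, by omega⟩
    let κ : Fin n → ℝ := fun α => (lam α)⁻¹
    let Fd : Fin n → ℝ := fun α => sigmaV1 ((k : ℤ) - 1) κ α * (κ α) ^ 2 / (sigmaV (k : ℤ) κ) ^ 2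
    let I3 : ℝ :=
      -(∑ α, ∑ γ ∈ Finset.univ.erase α,
          sigmaV2 ((k : ℤ) - 2) κ α γ * (κ α) ^ 2 * (κ γ) ^ 2 * (ξ α γ) ^ 2)
      + 2 * ∑ α, ∑ γ ∈ Finset.univ.erase α,
          sigmaV1 ((k : ℤ) - 1) κ α * (κ α) ^ 2 * κ γ * (ξ α γ) ^ 2
    (1 / (sigmaV (k : ℤ) κ) ^ 2) * I3
      ≥ ∑ α ∈ Finset.univ.erase i0, ∑ γ ∈ (Finset.univ.erase i0).erase α,
            Fd α * (ξ α γ) ^ 2 / lam γ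
        + ∑ γ ∈ Finset.univ.erase i0, Fd i0 * (ξ i0 γ) ^ 2 / lam γ
        + (1 + ((n : ℝ) - (k : ℝ)) / ((n : ℝ) - 1)) *
            ∑ α ∈ Finset.univ.erase i0, Fd α * (ξ α i0) ^ 2 / lam i0 := by
  intro i0 κ Fd I3
  have hκpos : ∀ β : Fin n, 0 < κ β := fun β => inv_pos.2 (hpos β)
  have hnR : (3:ℝ) ≤ (n:ℝ) := by exact_mod_cast hn
  have hkR : (k:ℝ) ≤ (n:ℝ) - 1 := by
    have : k ≤ n - 1 := hk2
    have h' : (k:ℝ) ≤ ((n-1 : ℕ) : ℝ) := by exact_mod_cast this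
    rwa [Nat.cast_sub (by omega), Nat.cast_one] at h'
  have hn1 : (0:ℝ) < (n:ℝ) - 1 := by linarith
  have hκmin : ∀ l : Fin n, κ i0 ≤ κ l := by
    intro l
    exact inv_anti₀ (hpos l) (hord i0 l (Fin.le_def.mpr (Nat.zero_le _)))
  have hS : 0 < sigmaV (k:ℤ) κ := by
    refine sigmaE_pos (Int.natCast_nonneg k) ?_ (fun i _ => hκpos i)
    rw [Int.toNat_natCast, Finset.card_univ, Fintype.card_fin]
    omega
  -- the pairwise inequality
  have hPair : ∀ α γ : Fin n, γ ≠ α →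
      (if γ = i0 then 1 + ((n:ℝ) - (k:ℝ)) / ((n:ℝ) - 1) else 1) *
          (sigmaV1 ((k:ℤ) - 1) κ α * (κ α) ^ 2 * κ γ * (ξ α γ) ^ 2)
        ≤ 2 * (sigmaV1 ((k:ℤ) - 1) κ α * (κ α) ^ 2 * κ γ * (ξ α γ) ^ 2)
          - sigmaV2 ((k:ℤ) - 2) κ α γ * (κ α) ^ 2 * (κ γ) ^ 2 * (ξ α γ) ^ 2 := by
    intro α γ hne
    have hγmem : γ ∈ Finset.univ.erase α := Finset.mem_erase.2 ⟨hne, Finset.mem_univ γ⟩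
    have hsplit : sigmaV1 ((k:ℤ) - 1) κ α
        = sigmaE ((Finset.univ.erase α).erase γ) ((k:ℤ) - 1) κ
          + κ γ * sigmaE ((Finset.univ.erase α).erase γ) ((k:ℤ) - 2) κ := by
      have h := sigmaE_erase hγmem ((k:ℤ) - 1) κ
      have e : (k:ℤ) - 1 - 1 = (k:ℤ) - 2 := by ring
      rw [e] at h
      exact h
    have hsig2 : sigmaV2 ((k:ℤ) - 2) κ α γ
        = sigmaE ((Finset.univ.erase α).erase γ) ((k:ℤ) - 2) κ := rfl
    set P := sigmaE ((Finset.univ.erase α).erase γ) ((k:ℤ) - 1) κ with hPdef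
    set Q := sigmaE ((Finset.univ.erase α).erase γ) ((k:ℤ) - 2) κ with hQdef
    have hP : 0 ≤ P := hPdef ▸ sigmaE_nonneg _ (fun l _ => (hκpos l).le)
    have hQ : 0 ≤ Q := hQdef ▸ sigmaE_nonneg _ (fun l _ => (hκpos l).le)
    have hw : 0 ≤ (κ α) ^ 2 * κ γ * (ξ α γ) ^ 2 :=
      mul_nonneg (mul_nonneg (sq_nonneg _) (hκpos γ).le) (sq_nonneg _)
    rw [hsig2, hsplit]
    by_cases hγ0 : γ = i0
    · subst hγ0
      rw [if_pos rfl]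
      have hcard : ((Finset.univ.erase α).erase i0).card = n - 2 := by
        rw [Finset.card_erase_of_mem hγmem, Finset.card_erase_of_mem (Finset.mem_univ α),
          Finset.card_univ, Fintype.card_fin]
        omega
      have hclaim := sigmaE_claim ((Finset.univ.erase α).erase i0) κ (hκpos i0).le
        (fun l _ => hκmin l) ((k:ℤ) - 2)
      have e1 : (k:ℤ) - 2 + 1 = (k:ℤ) - 1 := by ring
      rw [e1, hcard, ← hPdef, ← hQdef] at hclaim
      have h2n : 2 ≤ n := by omega
      push_cast [Nat.cast_sub h2n] at hclaim
      have hclaim' : ((n:ℝ) - (k:ℝ)) * (κ i0 * Q) ≤ ((k:ℝ) - 1) * P := by nlinarith [hclaim]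
      have hd : ((n:ℝ) - 1) ≠ 0 := ne_of_gt hn1
      have h2 : (1 + ((n:ℝ) - (k:ℝ)) / ((n:ℝ) - 1)) *
            ((P + κ i0 * Q) * (κ α) ^ 2 * κ i0 * (ξ α i0) ^ 2)
          + ((κ α) ^ 2 * κ i0 * (ξ α i0) ^ 2) *
              (((k:ℝ) - 1) * P - ((n:ℝ) - (k:ℝ)) * (κ i0 * Q)) / ((n:ℝ) - 1)
          = 2 * ((P + κ i0 * Q) * (κ α) ^ 2 * κ i0 * (ξ α i0) ^ 2)
            - Q * (κ α) ^ 2 * (κ i0) ^ 2 * (ξ α i0) ^ 2 := by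
        field_simp
        ring
      have h3 : 0 ≤ ((κ α) ^ 2 * κ i0 * (ξ α i0) ^ 2) *
          (((k:ℝ) - 1) * P - ((n:ℝ) - (k:ℝ)) * (κ i0 * Q)) / ((n:ℝ) - 1) :=
        div_nonneg (mul_nonneg hw (by linarith)) hn1.le
      linarith
    · rw [if_neg hγ0, one_mul]
      have h2 : 2 * ((P + κ γ * Q) * (κ α) ^ 2 * κ γ * (ξ α γ) ^ 2)
          - Q * (κ α) ^ 2 * (κ γ) ^ 2 * (ξ α γ) ^ 2
          - (P + κ γ * Q) * (κ α) ^ 2 * κ γ * (ξ α γ) ^ 2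
          = P * ((κ α) ^ 2 * κ γ * (ξ α γ) ^ 2) := by ring
      have h3 : 0 ≤ P * ((κ α) ^ 2 * κ γ * (ξ α γ) ^ 2) := mul_nonneg hP hw
      linarith
  -- rewrite I3
  have hI3 : I3 = ∑ α, ∑ γ ∈ Finset.univ.erase α,
      (2 * (sigmaV1 ((k:ℤ) - 1) κ α * (κ α) ^ 2 * κ γ * (ξ α γ) ^ 2)
        - sigmaV2 ((k:ℤ) - 2) κ α γ * (κ α) ^ 2 * (κ γ) ^ 2 * (ξ α γ) ^ 2) := by
    show -(∑ α, ∑ γ ∈ Finset.univ.erase α,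
          sigmaV2 ((k : ℤ) - 2) κ α γ * (κ α) ^ 2 * (κ γ) ^ 2 * (ξ α γ) ^ 2)
      + 2 * ∑ α, ∑ γ ∈ Finset.univ.erase α,
          sigmaV1 ((k : ℤ) - 1) κ α * (κ α) ^ 2 * κ γ * (ξ α γ) ^ 2 = _
    simp only [Finset.mul_sum, Finset.sum_sub_distrib]
    ring
  -- rewrite the RHS terms
  have hterm : ∀ α γ : Fin n, Fd α * (ξ α γ) ^ 2 / lam γ
      = 1 / (sigmaV (k:ℤ) κ) ^ 2 *
          (sigmaV1 ((k:ℤ) - 1) κ α * (κ α) ^ 2 * κ γ * (ξ α γ) ^ 2) := by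
    intro α γ
    show sigmaV1 ((k : ℤ) - 1) κ α * (κ α) ^ 2 / (sigmaV (k : ℤ) κ) ^ 2 * (ξ α γ) ^ 2 / lam γ
      = 1 / (sigmaV (k:ℤ) κ) ^ 2 *
          (sigmaV1 ((k:ℤ) - 1) κ α * (κ α) ^ 2 * (lam γ)⁻¹ * (ξ α γ) ^ 2)
    rw [div_eq_mul_inv, div_eq_mul_inv, one_div]
    ring
  have h1 : ∑ α ∈ Finset.univ.erase i0, ∑ γ ∈ (Finset.univ.erase i0).erase α,
        Fd α * (ξ α γ) ^ 2 / lam γ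
      = ∑ α ∈ Finset.univ.erase i0, ∑ γ ∈ (Finset.univ.erase i0).erase α,
          1 / (sigmaV (k:ℤ) κ) ^ 2 *
            ((if γ = i0 then 1 + ((n:ℝ) - (k:ℝ)) / ((n:ℝ) - 1) else 1) *
              (sigmaV1 ((k:ℤ) - 1) κ α * (κ α) ^ 2 * κ γ * (ξ α γ) ^ 2)) := by
    refine Finset.sum_congr rfl fun α hα => Finset.sum_congr rfl fun γ hγ => ?_
    have hγ0 : γ ≠ i0 := Finset.ne_of_mem_erase (Finset.mem_of_mem_erase hγ)
    rw [if_neg hγ0, one_mul, hterm]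
  have h2 : ∑ γ ∈ Finset.univ.erase i0, Fd i0 * (ξ i0 γ) ^ 2 / lam γ
      = ∑ γ ∈ Finset.univ.erase i0,
          1 / (sigmaV (k:ℤ) κ) ^ 2 *
            ((if γ = i0 then 1 + ((n:ℝ) - (k:ℝ)) / ((n:ℝ) - 1) else 1) *
              (sigmaV1 ((k:ℤ) - 1) κ i0 * (κ i0) ^ 2 * κ γ * (ξ i0 γ) ^ 2)) := by
    refine Finset.sum_congr rfl fun γ hγ => ?_
    rw [if_neg (Finset.ne_of_mem_erase hγ), one_mul, hterm]
  have h3 : (1 + ((n : ℝ) - (k : ℝ)) / ((n : ℝ) - 1)) *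
        ∑ α ∈ Finset.univ.erase i0, Fd α * (ξ α i0) ^ 2 / lam i0
      = ∑ α ∈ Finset.univ.erase i0,
          1 / (sigmaV (k:ℤ) κ) ^ 2 *
            ((if (i0 : Fin n) = i0 then 1 + ((n:ℝ) - (k:ℝ)) / ((n:ℝ) - 1) else 1) *
              (sigmaV1 ((k:ℤ) - 1) κ α * (κ α) ^ 2 * κ i0 * (ξ α i0) ^ 2)) := by
    rw [Finset.mul_sum]
    refine Finset.sum_congr rfl fun α _ => ?_
    rw [if_pos rfl, hterm α i0]
    ring
  have hcollect : 1 / (sigmaV (k:ℤ) κ) ^ 2 * ∑ α, ∑ γ ∈ Finset.univ.erase α,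
        ((if γ = i0 then 1 + ((n:ℝ) - (k:ℝ)) / ((n:ℝ) - 1) else 1) *
          (sigmaV1 ((k:ℤ) - 1) κ α * (κ α) ^ 2 * κ γ * (ξ α γ) ^ 2))
      = (∑ α ∈ Finset.univ.erase i0, ∑ γ ∈ (Finset.univ.erase i0).erase α,
            1 / (sigmaV (k:ℤ) κ) ^ 2 *
              ((if γ = i0 then 1 + ((n:ℝ) - (k:ℝ)) / ((n:ℝ) - 1) else 1) *
                (sigmaV1 ((k:ℤ) - 1) κ α * (κ α) ^ 2 * κ γ * (ξ α γ) ^ 2)))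
        + (∑ γ ∈ Finset.univ.erase i0,
            1 / (sigmaV (k:ℤ) κ) ^ 2 *
              ((if γ = i0 then 1 + ((n:ℝ) - (k:ℝ)) / ((n:ℝ) - 1) else 1) *
                (sigmaV1 ((k:ℤ) - 1) κ i0 * (κ i0) ^ 2 * κ γ * (ξ i0 γ) ^ 2)))
        + ∑ α ∈ Finset.univ.erase i0,
            1 / (sigmaV (k:ℤ) κ) ^ 2 *
              ((if (i0 : Fin n) = i0 then 1 + ((n:ℝ) - (k:ℝ)) / ((n:ℝ) - 1) else 1) *
                (sigmaV1 ((k:ℤ) - 1) κ α * (κ α) ^ 2 * κ i0 * (ξ α i0) ^ 2)) := by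
    rw [sum_pairs_split i0]
    simp only [mul_add, Finset.mul_sum]
  rw [ge_iff_le, h1, h2, h3, ← hcollect, hI3]
  refine mul_le_mul_of_nonneg_left ?_ (by positivity)
  refine Finset.sum_le_sum fun α _ => Finset.sum_le_sum fun γ hγ => ?_
  exact hPair α γ (Finset.ne_of_mem_erase hγ)
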